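/- Let σ : A* → A* be an aperiodic primitive morphism with admissible fixed point x ∈ A^ℤ and d = #A. Then the factor complexity of x satisfies p_x(n) ≤ |σ|^{4d²}·n for all n ≥ 1. -/

import Mathlib

open List

/-- Extension of a substitution to words. -/
def applyW {A : Type*} (σ : A → List A) (w : List A) : List A := w.flatMap σ

/-- `σⁿ` as a map on letters. -/
def powL {A : Type*} (σ : A → List A) (n : ℕ) (a : A) : List A := (applyW σ)^[n] [a]

/-- `σⁿ` as a map on words. -/
def iterW {A : Type*} (σ : A → List A) (n : ℕ) (w : List A) : List A := (applyW σ)^[n] w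

/-- A substitution is non-erasing if no letter maps to the empty word. -/
def NonErasing {A : Type*} (σ : A → List A) : Prop := ∀ a, σ a ≠ []

/-- A substitution is primitive if some power maps any letter to a word containing
every letter. -/
def PrimitiveSub {A : Type*} (σ : A → List A) : Prop :=
  ∃ k : ℕ, ∀ b c : A, b ∈ powL σ k c

/-- `σ` is prolongable on `a` if `σ a = a u` with `u` nonempty. -/
def Prolongable {A : Type*} (σ : A → List A) (a : A) : Prop :=
  ∃ u : List A, u ≠ [] ∧ σ a = a :: u

/-- `|σⁿ|`, the maximal length of the image of a letter under `σⁿ`. -/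
def maxLen {A : Type*} [Fintype A] (σ : A → List A) (n : ℕ) : ℕ :=
  Finset.univ.sup fun a => (powL σ n a).length

/-- `⟨σⁿ⟩`, the minimal length of the image of a letter under `σⁿ`. -/
def minLen {A : Type*} [Fintype A] [Nonempty A] (σ : A → List A) (n : ℕ) : ℕ :=
  Finset.univ.inf' Finset.univ_nonempty fun a => (powL σ n a).length

/-- The factor `x_{[i,j)}` of a two-sided sequence. -/
def seg {A : Type*} (x : ℤ → A) (i j : ℤ) : List A :=
  (List.range (j - i).toNat).map fun t => x (i + t)

/-- `w` is a factor of the two-sided sequence `x`. -/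
def FactorOf {A : Type*} (x : ℤ → A) (w : List A) : Prop :=
  ∃ i : ℤ, w = seg x i (i + w.length)

/-- The language of a substitution: words occurring in some `σⁿ(c)`. -/
def LangOf {A : Type*} (σ : A → List A) (w : List A) : Prop :=
  ∃ n : ℕ, ∃ c : A, w <:+: powL σ n c

/-- The map `f^{(1)}` associated with the substitution `τ` and the sequence `x`;
the map `f^{(p)}` of `σ` is obtained as `F (powL σ p) x`. -/
def F {A : Type*} (τ : A → List A) (x : ℤ → A) (i : ℤ) : ℤ :=
  if 0 ≤ i then (((seg x 0 i).flatMap τ).length : ℤ)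
  else -(((seg x i 0).flatMap τ).length : ℤ)

/-- `x` is a (two-sided) fixed point of `τ`:  `τ (x i)` is the block of `x`
between `f^{(1)}(i)` and `f^{(1)}(i+1)`. -/
def IsFixedPoint {A : Type*} (τ : A → List A) (x : ℤ → A) : Prop :=
  ∀ i : ℤ, seg x (F τ x i) (F τ x (i + 1)) = τ (x i)

/-- `x` is an admissible fixed point of `τ`: it is a fixed point and the word
`x₋₁x₀` occurs in some `τⁿ(c)`. -/
def Admissible {A : Type*} (τ : A → List A) (x : ℤ → A) : Prop :=
  IsFixedPoint τ x ∧ ∃ n : ℕ, ∃ c : A, [x (-1), x 0] <:+: powL τ n c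

/-- `τ` is recognizable on `x` with constant `L`. -/
def RecogWith {A : Type*} (τ : A → List A) (x : ℤ → A) (L : ℤ) : Prop :=
  0 < L ∧ ∀ i m : ℤ,
    seg x (m - L) (m + L + 1) = seg x (F τ x i - L) (F τ x i + L + 1) →
    ∃ j : ℤ, m = F τ x j ∧ x i = x j

/-- `x` is `k`-power-free: no nonempty word `w` has `w^k` as a factor of `x`. -/
def PowerFree {A : Type*} (x : ℤ → A) (k : ℕ) : Prop :=
  ∀ w : List A, w ≠ [] → ¬ FactorOf x (List.replicate k w).flatten

/-- `x` is recurrent: every factor occurs infinitely many times. -/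
def Recurrent {A : Type*} (x : ℤ → A) : Prop :=
  ∀ w : List A, FactorOf x w → ∀ N : ℤ, ∃ i : ℤ, N ≤ i ∧ w = seg x i (i + w.length)

/-- Number of occurrences of `u` in `w`. -/
def occCount {A : Type*} [DecidableEq A] (u w : List A) : ℕ :=
  (List.range (w.length + 1)).countP fun i => decide (u <+: w.drop i)

/-- `r` is a return word to `u` in `x`. -/
def ReturnWordOf {A : Type*} [DecidableEq A] (x : ℤ → A) (u r : List A) : Prop :=
  FactorOf x (r ++ u) ∧ u <+: (r ++ u) ∧ occCount u (r ++ u) = 2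

/-- `r` is a return word to `u` in the language of `σ`. -/
def ReturnWordLang {A : Type*} [DecidableEq A] (σ : A → List A) (u r : List A) : Prop :=
  LangOf σ (r ++ u) ∧ u <+: (r ++ u) ∧ occCount u (r ++ u) = 2

/-- `x` is linearly recurrent with constant `K`. -/
def LinRec {A : Type*} [DecidableEq A] (x : ℤ → A) (K : ℕ) : Prop :=
  Recurrent x ∧ ∀ u r : List A, FactorOf x u → ReturnWordOf x u r → r.length ≤ K * u.length

/-- `x` is aperiodic (not periodic). -/
def AperiodicSeq {A : Type*} (x : ℤ → A) : Prop :=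
  ¬ ∃ p : ℤ, 0 < p ∧ ∀ i : ℤ, x (i + p) = x i

/-- Factor complexity of `x`. -/
noncomputable def complexity {A : Type*} (x : ℤ → A) (n : ℕ) : ℕ :=
  Set.ncard {w : List A | FactorOf x w ∧ w.length = n}
section Basics
variable {A : Type*} (σ : A → List A)

lemma applyW_append (u v : List A) : applyW σ (u ++ v) = applyW σ u ++ applyW σ v := by
  simp [applyW]

lemma applyW_nil : applyW σ [] = [] := rfl

lemma iterW_nil (n : ℕ) : iterW σ n [] = [] := by
  induction n with
  | zero => rfl
  | succ n ih => rw [iterW, Function.iterate_succ_apply, applyW_nil]; exact ih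

lemma iterW_append (n : ℕ) (u v : List A) :
    iterW σ n (u ++ v) = iterW σ n u ++ iterW σ n v := by
  induction n generalizing u v with
  | zero => rfl
  | succ n ih =>
    rw [iterW, Function.iterate_succ_apply, applyW_append]
    exact ih _ _

lemma iterW_eq_flatMap (n : ℕ) (w : List A) : iterW σ n w = w.flatMap (powL σ n) := by
  induction w with
  | nil => simp [iterW_nil]
  | cons a t ih =>
    have : (a :: t) = [a] ++ t := rfl
    rw [this, iterW_append, ih]
    rfl

lemma powL_zero (a : A) : powL σ 0 a = [a] := rfl

lemma powL_add (m n : ℕ) (a : A) :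
    powL σ (m + n) a = (powL σ n a).flatMap (powL σ m) := by
  rw [powL, Function.iterate_add_apply, ← iterW_eq_flatMap]
  rfl

lemma powL_succ (n : ℕ) (a : A) : powL σ (n + 1) a = iterW σ n (σ a) := by
  rw [powL, Function.iterate_succ_apply]
  simp [applyW, iterW]

lemma powL_succ' (n : ℕ) (a : A) : powL σ (n + 1) a = applyW σ (powL σ n a) := by
  rw [powL, Function.iterate_succ_apply']
  rfl

lemma powL_one (a : A) : powL σ 1 a = σ a := by
  rw [powL_succ]; rfl

lemma iterW_ne_nil (h : NonErasing σ) (n : ℕ) {w : List A} (hw : w ≠ []) :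
    iterW σ n w ≠ [] := by
  induction n generalizing w with
  | zero => exact hw
  | succ n ih =>
    rw [iterW, Function.iterate_succ_apply]
    apply ih
    cases w with
    | nil => exact absurd rfl hw
    | cons a t =>
      simp only [applyW, List.flatMap_cons]
      intro hc
      exact h a (List.append_eq_nil_iff.mp hc).1

lemma powL_ne_nil (h : NonErasing σ) (n : ℕ) (a : A) : powL σ n a ≠ [] :=
  iterW_ne_nil σ h n (by simp)

lemma mem_powL_trans {m m' : ℕ} {a b c : A} (h1 : b ∈ powL σ m c)
    (h2 : a ∈ powL σ m' b) : a ∈ powL σ (m' + m) c := by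
  rw [powL_add, List.mem_flatMap]
  exact ⟨b, h1, h2⟩

lemma mem_powL_self_of_loop {a : A} (h : a ∈ σ a) (n : ℕ) : a ∈ powL σ n a := by
  induction n with
  | zero => simp [powL_zero]
  | succ n ih =>
    rw [powL_succ']
    simp only [applyW, List.mem_flatMap]
    exact ⟨a, ih, h⟩

end Basics
section Lens
variable {A : Type*} [Fintype A] [Nonempty A] (σ : A → List A)

set_option linter.unusedSectionVars false

lemma le_maxLen (n : ℕ) (a : A) : (powL σ n a).length ≤ maxLen σ n := by
  unfold maxLen
  exact Finset.le_sup (f := fun a => (powL σ n a).length) (Finset.mem_univ a)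

lemma minLen_le (n : ℕ) (a : A) : minLen σ n ≤ (powL σ n a).length :=
  Finset.inf'_le _ (Finset.mem_univ a)

lemma maxLen_zero : maxLen σ 0 = 1 := by
  unfold maxLen
  simp [powL_zero]
  exact Finset.sup_const Finset.univ_nonempty 1

lemma minLen_zero : minLen σ 0 = 1 := by
  unfold minLen
  simp [powL_zero]

lemma minLen_pos (h : NonErasing σ) (n : ℕ) : 1 ≤ minLen σ n := by
  apply Finset.le_inf'
  intro a _
  exact List.length_pos_iff.mpr (powL_ne_nil σ h n a)

lemma maxLen_pos (h : NonErasing σ) (n : ℕ) : 1 ≤ maxLen σ n :=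
  le_trans (minLen_pos σ h n) (le_trans (minLen_le σ n (Classical.arbitrary A)) (le_maxLen σ n _))

lemma length_flatMap_le {f : A → List A} {M : ℕ} (hf : ∀ a, (f a).length ≤ M)
    (w : List A) : (w.flatMap f).length ≤ w.length * M := by
  induction w with
  | nil => simp
  | cons a t ih =>
    simp only [List.flatMap_cons, List.length_append, List.length_cons]
    calc (f a).length + (t.flatMap f).length ≤ M + t.length * M :=
          Nat.add_le_add (hf a) ih
      _ = (t.length + 1) * M := by ring

lemma le_length_flatMap {f : A → List A} {m : ℕ} (hf : ∀ a, m ≤ (f a).length)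
    (w : List A) : w.length * m ≤ (w.flatMap f).length := by
  induction w with
  | nil => simp
  | cons a t ih =>
    simp only [List.flatMap_cons, List.length_append, List.length_cons]
    calc (t.length + 1) * m = m + t.length * m := by ring
      _ ≤ (f a).length + (t.flatMap f).length := Nat.add_le_add (hf a) ih

lemma maxLen_add_le (m n : ℕ) : maxLen σ (m + n) ≤ maxLen σ n * maxLen σ m := by
  apply Finset.sup_le
  intro a _
  rw [powL_add]
  calc ((powL σ n a).flatMap (powL σ m)).length ≤ (powL σ n a).length * maxLen σ m :=
        length_flatMap_le (fun b => le_maxLen σ m b) _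
    _ ≤ maxLen σ n * maxLen σ m := Nat.mul_le_mul_right _ (le_maxLen σ n a)

lemma maxLen_le_pow (N : ℕ) : maxLen σ N ≤ maxLen σ 1 ^ N := by
  induction N with
  | zero => simp [maxLen_zero]
  | succ N ih =>
    calc maxLen σ (N + 1) ≤ maxLen σ 1 * maxLen σ N := maxLen_add_le σ N 1
      _ ≤ maxLen σ 1 * maxLen σ 1 ^ N := Nat.mul_le_mul_left _ ih
      _ = maxLen σ 1 ^ (N + 1) := by ring

lemma minLen_succ_le (m : ℕ) : minLen σ (m + 1) ≤ minLen σ m * maxLen σ 1 := by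
  obtain ⟨c, _, hc⟩ := Finset.exists_mem_eq_inf' (Finset.univ_nonempty (α := A))
    (fun a => (powL σ m a).length)
  calc minLen σ (m + 1) ≤ (powL σ (m + 1) c).length := minLen_le σ _ c
    _ = (applyW σ (powL σ m c)).length := by rw [powL_succ']
    _ ≤ (powL σ m c).length * maxLen σ 1 := by
        apply length_flatMap_le
        intro a
        rw [← powL_one σ a]
        exact le_maxLen σ 1 a
    _ = minLen σ m * maxLen σ 1 := by rw [← hc]; rfl

section Prim
variable {σ} {K0 : ℕ} (hK0 : ∀ b c : A, b ∈ powL σ K0 c)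
include hK0

lemma maxLen_le_minLen_add (m : ℕ) : maxLen σ m ≤ minLen σ (m + K0) := by
  apply Finset.le_inf'
  intro c _
  obtain ⟨b, _, hb⟩ := Finset.exists_mem_eq_sup (Finset.univ (α := A))
    Finset.univ_nonempty (fun a => (powL σ m a).length)
  rw [maxLen, hb]
  obtain ⟨s, t, hst⟩ := List.append_of_mem (hK0 b c)
  rw [powL_add, hst]
  simp only [List.flatMap_append, List.flatMap_cons, List.length_append]
  omega

lemma two_mul_minLen_le (hd : 2 ≤ Fintype.card A) (m : ℕ) :
    2 * minLen σ m ≤ minLen σ (m + K0) := by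
  apply Finset.le_inf'
  intro c _
  rw [powL_add]
  classical
  have hlen : Fintype.card A ≤ (powL σ K0 c).length := by
    have huniv : (powL σ K0 c).toFinset = Finset.univ :=
      Finset.eq_univ_iff_forall.mpr (fun b => List.mem_toFinset.mpr (hK0 b c))
    calc Fintype.card A = (powL σ K0 c).toFinset.card := by rw [huniv]; rfl
      _ ≤ (powL σ K0 c).length := List.toFinset_card_le _
  calc 2 * minLen σ m ≤ (powL σ K0 c).length * minLen σ m := by
        apply Nat.mul_le_mul_right
        omega
    _ ≤ ((powL σ K0 c).flatMap (powL σ m)).length :=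
        le_length_flatMap (fun b => minLen_le σ m b) _

lemma minLen_unbounded (hd : 2 ≤ Fintype.card A) (hne : NonErasing σ) (n : ℕ) :
    ∃ N, n ≤ minLen σ N := by
  refine ⟨n * K0, ?_⟩
  induction n with
  | zero => exact Nat.zero_le _
  | succ n ih =>
    have h2 := two_mul_minLen_le hK0 hd (n * K0)
    have h1 := minLen_pos σ hne (n * K0)
    have : (n + 1) * K0 = n * K0 + K0 := by ring
    rw [this]
    omega

end Prim
end Lens
section Reach
variable {A : Type*} [Fintype A] [Nonempty A] {σ : A → List A}

set_option linter.unusedSectionVars false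

lemma reach_small {k : ℕ} (hσk : ∀ b c : A, b ∈ powL σ k c) (c b : A) :
    ∃ p ≤ Fintype.card A - 1, b ∈ powL σ p c := by
  classical
  set d := Fintype.card A with hd
  set T : ℕ → Finset A := fun m => Finset.univ.filter (fun b => ∃ p ≤ m, b ∈ powL σ p c)
    with hT
  have mem_T : ∀ m b', b' ∈ T m ↔ ∃ p ≤ m, b' ∈ powL σ p c := by
    intro m b'
    simp [hT]
  have mono : ∀ {m m' : ℕ}, m ≤ m' → T m ⊆ T m' := by
    intro m m' hmm b' hb'
    rw [mem_T] at *
    obtain ⟨p, hp, hmem⟩ := hb'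
    exact ⟨p, le_trans hp hmm, hmem⟩
  have hstep : ∀ j, T (j + 1) ⊆ T j → T (j + 2) ⊆ T (j + 1) := by
    intro j hsub b' hb'
    rw [mem_T] at hb'
    obtain ⟨p, hp, hmem⟩ := hb'
    match p, hmem with
    | 0, hmem =>
      apply mono (Nat.zero_le (j+1))
      rw [mem_T]
      exact ⟨0, le_refl _, hmem⟩
    | (q+1), hmem =>
      rw [powL_succ'] at hmem
      simp only [applyW, List.mem_flatMap] at hmem
      obtain ⟨b'', hb''q, hb'mem⟩ := hmem
      have : b'' ∈ T j := by
        apply hsub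
        rw [mem_T]
        exact ⟨q, by omega, hb''q⟩
      rw [mem_T] at this
      obtain ⟨r, hr, hrmem⟩ := this
      rw [mem_T]
      refine ⟨1 + r, by omega, mem_powL_trans σ hrmem ?_⟩
      rw [powL_one]
      exact hb'mem
  have hchain1 : ∀ j, T (j + 1) ⊆ T j → ∀ r, T (j + r + 1) ⊆ T (j + r) := by
    intro j hsub r
    induction r with
    | zero => exact hsub
    | succ r ih =>
      have := hstep (j + r) ih
      have e1 : j + r + 2 = j + (r + 1) + 1 := by omega
      have e2 : j + r + 1 = j + (r + 1) := by omega
      rwa [e1, e2] at this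
  have hchain : ∀ j, T (j + 1) ⊆ T j → ∀ r, T (j + r) ⊆ T j := by
    intro j hsub r
    induction r with
    | zero => exact fun b hb => hb
    | succ r ih =>
      intro b hb
      apply ih
      have : j + (r + 1) = j + r + 1 := by omega
      rw [this] at hb
      exact hchain1 j hsub r hb
  have hC : ∀ j : ℕ, (∃ m < j, T (m + 1) ⊆ T m) ∨ j + 1 ≤ (T j).card := by
    intro j
    induction j with
    | zero =>
      right
      have : c ∈ T 0 := (mem_T 0 c).mpr ⟨0, le_refl _, by simp [powL_zero]⟩
      exact Finset.card_pos.mpr ⟨c, this⟩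
    | succ j ih =>
      rcases ih with ⟨m, hm, hsub⟩ | hcard
      · exact Or.inl ⟨m, by omega, hsub⟩
      · by_cases h : T (j + 1) ⊆ T j
        · exact Or.inl ⟨j, by omega, h⟩
        · right
          have hss : T j ⊂ T (j + 1) := ⟨mono (by omega), h⟩
          have := Finset.card_lt_card hss
          omega
  have hbT : ∀ j, b ∈ T (max j k) → b ∈ T j → True := fun _ _ _ => trivial
  have hbk : b ∈ T k := (mem_T k b).mpr ⟨k, le_refl _, hσk b c⟩
  have hfinal : b ∈ T (d - 1) := by
    rcases hC (d - 1) with ⟨m, hm, hsub⟩ | hcard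
    · have hTm : b ∈ T m := by
        by_cases hkm : k ≤ m
        · exact mono hkm hbk
        · have : T (m + (k - m)) ⊆ T m := hchain m hsub (k - m)
          apply this
          have : m + (k - m) = k := by omega
          rw [this]
          exact hbk
      exact mono (by omega) hTm
    · have h1 : (T (d - 1)).card ≤ d := by
        rw [hd]
        exact Finset.card_le_univ _
      have h2 : 1 ≤ d := Fintype.card_pos
      have : (T (d - 1)).card = Fintype.card A := by omega
      have := Finset.eq_univ_of_card _ this
      rw [this]
      exact Finset.mem_univ b
  rw [mem_T] at hfinal
  exact hfinal

lemma prim_index_small {k : ℕ} (hσk : ∀ b c : A, b ∈ powL σ k c)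
    {a : A} (ha : a ∈ σ a) (hd : 2 ≤ Fintype.card A) :
    ∀ b c : A, b ∈ powL σ (2 * Fintype.card A - 2) c := by
  intro b c
  obtain ⟨q, hq, hqa⟩ := reach_small hσk c a
  obtain ⟨p, hp, hpb⟩ := reach_small hσk a b
  have hloop : a ∈ powL σ (2 * Fintype.card A - 2 - p - q) a :=
    mem_powL_self_of_loop σ ha _
  have h1 : a ∈ powL σ ((2 * Fintype.card A - 2 - p - q) + q) c :=
    mem_powL_trans σ hqa hloop
  have h2 : b ∈ powL σ (p + ((2 * Fintype.card A - 2 - p - q) + q)) c :=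
    mem_powL_trans σ h1 hpb
  have : p + ((2 * Fintype.card A - 2 - p - q) + q) = 2 * Fintype.card A - 2 := by omega
  rwa [this] at h2

end Reach
section Seg
variable {A : Type*} (x : ℤ → A)

lemma flatten_map_singleton {α β : Type*} (g : α → β) (l : List α) :
    (List.map (fun a => [g a]) l).flatten = List.map g l := by
  induction l with
  | nil => rfl
  | cons a t ih => simp [ih]

lemma seg_def (i j : ℤ) :
    seg x i j = (List.range (j - i).toNat).map (fun t : ℕ => x (i + (t:ℤ))) := by
  simp [seg, List.pure_def, List.flatMap_def, Function.comp_def, flatten_map_singleton]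

lemma seg_nil {i j : ℤ} (h : j ≤ i) : seg x i j = [] := by
  rw [seg_def]
  have : (j - i).toNat = 0 := by omega
  rw [this]
  rfl

lemma length_seg (i j : ℤ) : (seg x i j).length = (j - i).toNat := by
  simp [seg_def]

lemma seg_succ_right {i j : ℤ} (h : i ≤ j) :
    seg x i (j + 1) = seg x i j ++ [x j] := by
  rw [seg_def, seg_def]
  have h1 : (j + 1 - i).toNat = (j - i).toNat + 1 := by omega
  rw [h1, List.range_succ, List.map_append]
  congr 1
  simp only [List.map_cons, List.map_nil]
  congr 2
  omega

lemma seg_single (i : ℤ) : seg x i (i + 1) = [x i] := by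
  rw [seg_succ_right x (le_refl i), seg_nil x (le_refl i)]
  rfl

lemma seg_append {i j k : ℤ} (hij : i ≤ j) (hjk : j ≤ k) :
    seg x i j ++ seg x j k = seg x i k := by
  obtain ⟨t, ht⟩ : ∃ t : ℕ, k = j + t := ⟨(k - j).toNat, by omega⟩
  subst ht
  induction t with
  | zero => simp [seg_nil x (le_refl j)]
  | succ t ih =>
    have h1 : j + (t : ℤ) ≤ j + (t + 1 : ℕ) := by push_cast; omega
    have e : j + ((t + 1 : ℕ) : ℤ) = (j + t) + 1 := by push_cast; ring
    rw [e, seg_succ_right x (by omega : j ≤ j + (t:ℤ)),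
        seg_succ_right x (by omega : i ≤ j + (t:ℤ)), ← List.append_assoc,
        ih (by omega)]

end Seg

section FF
variable {A : Type*} (τ : A → List A) (x : ℤ → A)

lemma F_zero : F τ x 0 = 0 := by
  unfold F
  rw [if_pos (le_refl 0), seg_nil x (le_refl 0)]
  rfl

lemma F_succ (i : ℤ) : F τ x (i + 1) = F τ x i + (τ (x i)).length := by
  unfold F
  by_cases hi : 0 ≤ i
  · rw [if_pos (by omega : (0:ℤ) ≤ i + 1), if_pos hi]
    rw [seg_succ_right x hi, List.flatMap_append]
    simp
  · rw [if_neg hi]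
    have hi1 : i + 1 ≤ 0 := by omega
    have hseg : seg x i 0 = [x i] ++ seg x (i + 1) 0 := by
      rw [← seg_append x (by omega : i ≤ i + 1) hi1, seg_single]
    by_cases hi2 : 0 ≤ i + 1
    · have h01 : i + 1 = 0 := by omega
      have h0 : seg x (i + 1) 0 = [] := seg_nil x (by omega)
      rw [if_pos hi2, h01, seg_nil x (le_refl 0), hseg, h0]
      simp
    · rw [if_neg hi2, hseg]
      simp only [List.flatMap_append, List.length_append]
      push_cast
      simp only [List.flatMap_cons, List.flatMap_nil, List.append_nil]
      ring

lemma F_add_nat (hτ : NonErasing τ) (i : ℤ) (t : ℕ) :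
    F τ x i + t ≤ F τ x (i + t) := by
  induction t with
  | zero => simp
  | succ t ih =>
    have e : i + ((t + 1 : ℕ) : ℤ) = (i + t) + 1 := by push_cast; ring
    rw [e, F_succ]
    have : 1 ≤ (τ (x (i + t))).length := List.length_pos_iff.mpr (hτ _)
    push_cast
    omega

lemma F_mono (hτ : NonErasing τ) {i j : ℤ} (h : i ≤ j) : F τ x i ≤ F τ x j := by
  have := F_add_nat τ x hτ i (j - i).toNat
  have e : i + ((j - i).toNat : ℤ) = j := by omega
  rw [e] at this
  omega

lemma F_strict_mono (hτ : NonErasing τ) (i : ℤ) : F τ x i + 1 ≤ F τ x (i + 1) := by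
  rw [F_succ]
  have : 1 ≤ (τ (x i)).length := List.length_pos_iff.mpr (hτ _)
  omega

lemma le_F_self (hτ : NonErasing τ) {j : ℤ} (h : 0 ≤ j) : j ≤ F τ x j := by
  have := F_add_nat τ x hτ 0 j.toNat
  rw [F_zero] at this
  have e : (0:ℤ) + (j.toNat : ℤ) = j := by omega
  rw [e] at this
  omega

lemma F_self_le (hτ : NonErasing τ) {j : ℤ} (h : j ≤ 0) : F τ x j ≤ j := by
  have := F_add_nat τ x hτ j (-j).toNat
  have e : j + ((-j).toNat : ℤ) = 0 := by omega
  rw [e, F_zero] at this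
  omega

lemma exists_block (hτ : NonErasing τ) (i : ℤ) :
    ∃ j : ℤ, F τ x j ≤ i ∧ i < F τ x (j + 1) := by
  have key : ∀ t : ℕ, ∀ j : ℤ, F τ x j ≤ i → i < F τ x (j + t) →
      ∃ j' : ℤ, F τ x j' ≤ i ∧ i < F τ x (j' + 1) := by
    intro t
    induction t with
    | zero =>
      intro j h1 h2
      simp at h2
      omega
    | succ t ih =>
      intro j h1 h2
      by_cases h : i < F τ x (j + 1)
      · exact ⟨j, h1, h⟩
      · push_neg at h
        apply ih (j + 1) h
        have e : j + ((t + 1 : ℕ) : ℤ) = (j + 1) + t := by push_cast; ring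
        rwa [e] at h2
  set jlo : ℤ := -(i.natAbs + 1) with hjlo
  set jhi : ℤ := i.natAbs + 1 with hjhi
  have h1 : F τ x jlo ≤ i := by
    have := F_self_le τ x hτ (by omega : jlo ≤ 0)
    omega
  have h2 : i < F τ x jhi := by
    have := le_F_self τ x hτ (by omega : (0:ℤ) ≤ jhi)
    omega
  apply key (jhi - jlo).toNat jlo h1
  have e : jlo + ((jhi - jlo).toNat : ℤ) = jhi := by omega
  rwa [e]

end FF
section FP
variable {A : Type*} {τ : A → List A} {x : ℤ → A}

lemma F_eq_pos (τ : A → List A) (x : ℤ → A) {j : ℤ} (h : 0 ≤ j) :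
    F τ x j = (((seg x 0 j).flatMap τ).length : ℤ) := by
  unfold F; rw [if_pos h]

lemma F_eq_neg (τ : A → List A) (x : ℤ → A) {j : ℤ} (h : j ≤ 0) :
    F τ x j = -(((seg x j 0).flatMap τ).length : ℤ) := by
  unfold F
  by_cases h0 : 0 ≤ j
  · have : j = 0 := by omega
    subst this
    rw [if_pos h0, seg_nil x (le_refl 0)]
    simp
  · rw [if_neg h0]

lemma seg_flatMap (hfp : IsFixedPoint τ x) (hτ : NonErasing τ) (t : ℕ) (i : ℤ) :
    (seg x i (i + t)).flatMap τ = seg x (F τ x i) (F τ x (i + t)) := by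
  induction t with
  | zero =>
    simp only [Nat.cast_zero, add_zero]
    rw [seg_nil x (le_refl i), seg_nil x (le_refl (F τ x i))]
    rfl
  | succ t ih =>
    have e : i + ((t + 1 : ℕ) : ℤ) = (i + t) + 1 := by push_cast; ring
    rw [e, seg_succ_right x (by omega : i ≤ i + (t:ℤ)), List.flatMap_append, ih]
    have hblock := hfp (i + t)
    simp only [List.flatMap_cons, List.flatMap_nil, List.append_nil]
    rw [← hblock]
    exact seg_append x (F_mono τ x hτ (by omega)) (F_mono τ x hτ (by omega))

lemma seg_flatMap' (hfp : IsFixedPoint τ x) (hτ : NonErasing τ) {i j : ℤ} (h : i ≤ j) :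
    (seg x i j).flatMap τ = seg x (F τ x i) (F τ x j) := by
  have := seg_flatMap hfp hτ (j - i).toNat i
  have e : i + (((j - i).toNat : ℕ) : ℤ) = j := by omega
  rwa [e] at this

end FP

section Pow
variable {A : Type*} {σ : A → List A} {x : ℤ → A}

lemma powL_succ_flatMap (σ : A → List A) (N : ℕ) (a : A) :
    powL σ (N + 1) a = (σ a).flatMap (powL σ N) := by
  rw [powL_succ, iterW_eq_flatMap]

lemma flatMap_powL_zero (l : List A) : l.flatMap (powL σ 0) = l := by
  rw [← iterW_eq_flatMap]; rfl

lemma F_pow_zero (i : ℤ) : F (powL σ 0) x i = i := by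
  by_cases h : 0 ≤ i
  · rw [F_eq_pos _ _ h, flatMap_powL_zero, length_seg]
    omega
  · rw [F_eq_neg _ _ (by omega), flatMap_powL_zero, length_seg]
    omega

lemma F_pow_succ (hfp : IsFixedPoint σ x) (hne : NonErasing σ) (N : ℕ) (i : ℤ) :
    F (powL σ (N + 1)) x i = F (powL σ N) x (F σ x i) := by
  have hassoc : ∀ l : List A, l.flatMap (powL σ (N + 1)) = (l.flatMap σ).flatMap (powL σ N) := by
    intro l
    rw [List.flatMap_assoc]
    congr 1
    funext a
    rw [powL_succ_flatMap]
  by_cases h : 0 ≤ i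
  · have hF1 : 0 ≤ F σ x i := by
      have := le_F_self σ x hne h
      omega
    rw [F_eq_pos _ _ h, F_eq_pos _ _ hF1, hassoc,
        seg_flatMap' hfp hne h, F_zero]
  · have hi0 : i ≤ 0 := by omega
    have hF1 : F σ x i ≤ 0 := by
      have := F_self_le σ x hne hi0
      omega
    rw [F_eq_neg _ _ hi0, F_eq_neg _ _ hF1, hassoc,
        seg_flatMap' hfp hne hi0, F_zero]

lemma nonErasing_powL (hne : NonErasing σ) (N : ℕ) : NonErasing (powL σ N) :=
  fun a => powL_ne_nil σ hne N a

lemma isFixedPoint_pow (hfp : IsFixedPoint σ x) (hne : NonErasing σ) (N : ℕ) :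
    IsFixedPoint (powL σ N) x := by
  induction N with
  | zero =>
    intro i
    rw [F_pow_zero, F_pow_zero, seg_single]
    rfl
  | succ N ih =>
    intro i
    rw [F_pow_succ hfp hne, F_pow_succ hfp hne, powL_succ_flatMap]
    have hF1 : F σ x i ≤ F σ x (i + 1) := F_mono σ x hne (by omega)
    rw [← hfp i, seg_flatMap' ih (nonErasing_powL hne N) hF1]

end Pow
section Extract
variable {A : Type*} [Fintype A] [Nonempty A] {σ : A → List A} {x : ℤ → A}

set_option linter.unusedSectionVars false

lemma factor_repr (hfp : IsFixedPoint σ x) (hne : NonErasing σ) {N n : ℕ}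
    (hn : n ≤ minLen σ N) {w : List A} (hw : FactorOf x w) (hlen : w.length = n) :
    ∃ (b c : A) (t : ℕ), t ≤ 2 * maxLen σ N ∧
      w = ((powL σ N b ++ powL σ N c).drop t).take n := by
  set τ := powL σ N with hτ
  have hfpN : IsFixedPoint τ x := isFixedPoint_pow hfp hne N
  have hneN : NonErasing τ := nonErasing_powL hne N
  obtain ⟨i, hi⟩ := hw
  rw [hlen] at hi
  obtain ⟨j, hj1, hj2⟩ := exists_block τ x hneN i
  refine ⟨x j, x (j + 1), (i - F τ x j).toNat, ?_, ?_⟩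
  · have h1 := F_succ τ x j
    have h2 := F_succ τ x (j + 1)
    have hb : (τ (x j)).length ≤ maxLen σ N := le_maxLen σ N (x j)
    have hc : (τ (x (j+1))).length ≤ maxLen σ N := le_maxLen σ N (x (j+1))
    omega
  · have hblock1 := hfpN j
    have hblock2 := hfpN (j + 1)
    have hmin1 : (n : ℤ) ≤ (τ (x (j+1))).length := by
      have h := minLen_le σ N (x (j+1))
      rw [← hτ] at h
      omega
    have hF2 : F τ x (j + 1 + 1) = F τ x (j + 1) + (τ (x (j+1))).length := F_succ τ x (j+1)
    have hupper : i + n ≤ F τ x (j + 1 + 1) := by omega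
    have hin : i ≤ i + (n:ℤ) := by omega
    have hdecomp : τ (x j) ++ τ (x (j + 1)) =
        seg x (F τ x j) i ++ (w ++ seg x (i + n) (F τ x (j + 1 + 1))) := by
      rw [← hblock1, ← hblock2, hi]
      rw [seg_append x hin hupper,
          seg_append x hj1 (le_trans hin hupper),
          seg_append x (F_mono τ x hneN (by omega : j ≤ j + 1))
            (F_mono τ x hneN (by omega : j + 1 ≤ j + 1 + 1))]
    have hslen : (seg x (F τ x j) i).length = (i - F τ x j).toNat := length_seg x _ _
    rw [hdecomp, ← hslen, List.drop_left, ← hlen]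
    rw [List.take_left]

lemma complexity_le_count (hfp : IsFixedPoint σ x) (hne : NonErasing σ) {N n : ℕ}
    (hn : n ≤ minLen σ N) :
    complexity x n ≤ Fintype.card A * Fintype.card A * (2 * maxLen σ N + 1) := by
  classical
  set M := 2 * maxLen σ N + 1 with hM
  set g : A × A × Fin M → List A :=
    fun p => ((powL σ N p.1 ++ powL σ N p.2.1).drop p.2.2).take n with hg
  have hsub : {w : List A | FactorOf x w ∧ w.length = n} ⊆ Set.range g := by
    rintro w ⟨hw, hlen⟩
    obtain ⟨b, c, t, ht, hrepr⟩ := factor_repr hfp hne hn hw hlen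
    exact ⟨⟨b, c, ⟨t, by omega⟩⟩, hrepr.symm⟩
  calc complexity x n ≤ (Set.range g).ncard :=
        Set.ncard_le_ncard hsub (Set.finite_range g)
    _ ≤ Fintype.card (A × A × Fin M) := by
        rw [← Set.image_univ]
        calc (g '' Set.univ).ncard ≤ Set.univ.ncard := Set.ncard_image_le Set.finite_univ
          _ = Fintype.card (A × A × Fin M) := by
              rw [Set.ncard_univ, Nat.card_eq_fintype_card]
    _ = Fintype.card A * Fintype.card A * M := by
        simp [Fintype.card_prod, Fintype.card_fin]
        ring

end Extract
theorem stmt16 {A : Type*} [Fintype A] [Nonempty A] (σ : A → List A)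
    (hσ : PrimitiveSub σ) (x : ℤ → A) (hx : Admissible σ x)
    (hap : AperiodicSeq x) :
    ∀ n : ℕ, 1 ≤ n →
      complexity x n ≤ maxLen σ 1 ^ (4 * Fintype.card A ^ 2) * n := by
  intro n hn
  have hfp : IsFixedPoint σ x := hx.1
  set d := Fintype.card A with hdd
  set L := maxLen σ 1 with hLL
  -- d ≥ 2
  have hd : 2 ≤ d := by
    by_contra h
    push_neg at h
    have h1 : 1 ≤ d := Fintype.card_pos
    have hcard : Fintype.card A = 1 := by omega
    obtain ⟨a, ha⟩ := Fintype.card_eq_one_iff.mp hcard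
    exact hap ⟨1, one_pos, fun i => (ha _).trans (ha _).symm⟩
  obtain ⟨k, hσk⟩ := hσ
  -- k ≥ 1
  have hk1 : 1 ≤ k := by
    by_contra h
    push_neg at h
    interval_cases k
    obtain ⟨a₁, a₂, hne12⟩ := Fintype.exists_pair_of_one_lt_card (by omega : 1 < Fintype.card A)
    have h1 : a₁ ∈ powL σ 0 a₂ := hσk a₁ a₂
    rw [powL_zero] at h1
    simp at h1
    exact hne12 h1
  -- non-erasing
  have hne : NonErasing σ := by
    intro c hc
    obtain ⟨m, rfl⟩ := Nat.exists_eq_add_of_le hk1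
    have := hσk c c
    rw [Nat.add_comm, powL_succ, hc, iterW_nil] at this
    exact List.not_mem_nil this
  -- loop at x 0
  have hloop : x 0 ∈ σ (x 0) := by
    have h0 := hfp 0
    rw [F_zero] at h0
    have hF1 : F σ x (0 + 1) = (σ (x 0)).length := by
      rw [F_succ, F_zero]
      simp
    have hpos : 1 ≤ (σ (x 0)).length := List.length_pos_iff.mpr (hne _)
    have hmem : x 0 ∈ seg x 0 (F σ x (0 + 1)) := by
      rw [seg_def]
      refine List.mem_map.mpr ⟨0, ?_, by simp⟩
      rw [List.mem_range]
      omega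
    rwa [h0] at hmem
  -- small primitivity index
  set K0 := 2 * d - 2 with hK0d
  have hK0 : ∀ b c : A, b ∈ powL σ K0 c := prim_index_small hσk hloop hd
  -- L ≥ 2
  have hL1 : 1 ≤ L := maxLen_pos σ hne 1
  have hL2 : 2 ≤ L := by
    by_contra h
    push_neg at h
    have hlen1 : ∀ a : A, (σ a).length = 1 := by
      intro a
      have h1 : (σ a).length ≤ L := by
        rw [hLL, ← powL_one σ a]
        exact le_maxLen σ 1 a
      have h2 : 1 ≤ (σ a).length := List.length_pos_iff.mpr (hne a)
      omega
    have hplen : ∀ m (c : A), (powL σ m c).length = 1 := by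
      intro m
      induction m with
      | zero => intro c; rw [powL_zero]; rfl
      | succ m ih =>
        intro c
        rw [powL_succ']
        have hle : (applyW σ (powL σ m c)).length ≤ (powL σ m c).length * 1 :=
          length_flatMap_le (fun a => le_of_eq (hlen1 a)) _
        have hge : (powL σ m c).length * 1 ≤ (applyW σ (powL σ m c)).length :=
          le_length_flatMap (fun a => ge_of_eq (hlen1 a)) _
        rw [ih c] at hle hge
        omega
    obtain ⟨a₁, a₂, hne12⟩ := Fintype.exists_pair_of_one_lt_card (by omega : 1 < Fintype.card A)
    obtain ⟨e, he⟩ := List.length_eq_one_iff.mp (hplen k a₂)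
    have h1 := hσk a₁ a₂
    have h2 := hσk a₂ a₂
    rw [he] at h1 h2
    simp at h1 h2
    exact hne12 (h1.trans h2.symm)
  -- minimal N with n ≤ minLen σ N
  have hex : ∃ N, n ≤ minLen σ N := minLen_unbounded hK0 hd hne n
  set N := Nat.find hex with hN
  have hNle : n ≤ minLen σ N := Nat.find_spec hex
  -- minLen σ N ≤ L * n
  have hminle : minLen σ N ≤ L * n := by
    match hN2 : N with
    | 0 =>
      rw [minLen_zero]
      calc 1 ≤ 1 * 1 := le_refl _
        _ ≤ L * n := Nat.mul_le_mul hL1 hn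
    | M + 1 =>
      have hMlt : minLen σ M < n := by
        have := Nat.find_min hex (by omega : M < N)
        omega
      calc minLen σ (M + 1) ≤ minLen σ M * L := minLen_succ_le σ M
        _ ≤ n * L := Nat.mul_le_mul_right _ (by omega)
        _ = L * n := Nat.mul_comm _ _
  -- maxLen σ N ≤ L ^ K0 * minLen σ N
  have hmax_min : maxLen σ N ≤ L ^ K0 * minLen σ N := by
    rcases Nat.lt_or_ge N K0 with hcase | hcase
    · calc maxLen σ N ≤ L ^ N := maxLen_le_pow σ N
        _ ≤ L ^ K0 := Nat.pow_le_pow_right (by omega) (by omega)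
        _ = L ^ K0 * 1 := (Nat.mul_one _).symm
        _ ≤ L ^ K0 * minLen σ N := Nat.mul_le_mul_left _ (minLen_pos σ hne N)
    · have he : N - K0 + K0 = N := by omega
      calc maxLen σ N = maxLen σ (N - K0 + K0) := by rw [he]
        _ ≤ maxLen σ K0 * maxLen σ (N - K0) := maxLen_add_le σ (N - K0) K0
        _ ≤ L ^ K0 * minLen σ (N - K0 + K0) :=
            Nat.mul_le_mul (maxLen_le_pow σ K0) (maxLen_le_minLen_add hK0 (N - K0))
        _ = L ^ K0 * minLen σ N := by rw [he]
  have hmaxN : maxLen σ N ≤ L ^ (K0 + 1) * n := by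
    calc maxLen σ N ≤ L ^ K0 * minLen σ N := hmax_min
      _ ≤ L ^ K0 * (L * n) := Nat.mul_le_mul_left _ hminle
      _ = L ^ (K0 + 1) * n := by ring
  -- counting
  have hcount : complexity x n ≤ d * d * (2 * maxLen σ N + 1) :=
    complexity_le_count hfp hne hNle
  have hmaxpos : 1 ≤ maxLen σ N := maxLen_pos σ hne N
  have hcount2 : complexity x n ≤ 3 * d ^ 2 * maxLen σ N := by
    calc complexity x n ≤ d * d * (2 * maxLen σ N + 1) := hcount
      _ ≤ d * d * (3 * maxLen σ N) := by
          apply Nat.mul_le_mul_left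
          omega
      _ = 3 * d ^ 2 * maxLen σ N := by ring
  -- arithmetic
  have h3d : 3 * d ^ 2 ≤ L ^ (2 * d ^ 2) := by
    have h1 : d ^ 2 < 2 ^ (d ^ 2) := Nat.lt_two_pow_self
    have h2 : 3 ≤ 2 ^ (d ^ 2) := by
      calc (3:ℕ) ≤ 2 ^ 2 := by omega
        _ ≤ 2 ^ (d ^ 2) := Nat.pow_le_pow_right (by omega) (by nlinarith)
    calc 3 * d ^ 2 ≤ 2 ^ (d ^ 2) * 2 ^ (d ^ 2) := Nat.mul_le_mul h2 (le_of_lt h1)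
      _ = 2 ^ (2 * d ^ 2) := by rw [← pow_add]; ring_nf
      _ ≤ L ^ (2 * d ^ 2) := Nat.pow_le_pow_left hL2 _
  have hexp : 2 * d ^ 2 + (K0 + 1) ≤ 4 * d ^ 2 := by
    have hdsq : 2 * d ≤ d ^ 2 + 1 := by nlinarith
    omega
  calc complexity x n ≤ 3 * d ^ 2 * maxLen σ N := hcount2
    _ ≤ 3 * d ^ 2 * (L ^ (K0 + 1) * n) := Nat.mul_le_mul_left _ hmaxN
    _ ≤ L ^ (2 * d ^ 2) * (L ^ (K0 + 1) * n) := Nat.mul_le_mul_right _ h3d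
    _ = L ^ (2 * d ^ 2 + (K0 + 1)) * n := by rw [pow_add]; ring
    _ ≤ L ^ (4 * d ^ 2) * n := Nat.mul_le_mul_right _ (Nat.pow_le_pow_right (by omega) hexp)
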